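/- arXiv:1703.02346 — 4 statements merged into one kernel-verified Lean document; each statement's English description precedes it below -/
import Mathlib

section
/- Let (Q, f) be a triangulation quiver with at least three vertices. Then the following conditions are equivalent: (a) n_α = 3 for every arrow α ∈ Q₁; (b) g³ is the identity on Q₁; (c) there exists an arrow β ∈ Q₁ such that n_β = 3, n_{β̄} = 3, n_{f(β)} = 3 and n_{f(β̄)} = 3. (Lemma 6.6, equivalence of conditions (ii), (iii), (iv).) -/
/-- A triangulation quiver: a finite connected 2-regular quiver `(V, A, s, t)` together
with a permutation `f` of the arrows satisfying `s (f a) = t a` and `f ∘ f ∘ f = id`.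
The field `bar` records, for each arrow `a`, the unique arrow `ᾱ ≠ α` with the same
source (it exists and is unique by 2-regularity), together with its defining properties. -/
structure TriangulationQuiver where
  V : Type
  A : Type
  fintypeV : Fintype V
  fintypeA : Fintype A
  s : A → V
  t : A → V
  two_regular_src : ∀ v : V, Set.ncard {a : A | s a = v} = 2
  two_regular_tgt : ∀ v : V, Set.ncard {a : A | t a = v} = 2
  connected : ∀ u v : V,
    Relation.ReflTransGen (fun x y => ∃ a : A, (s a = x ∧ t a = y) ∨ (s a = y ∧ t a = x)) u v
  f : A → A
  f_cube : ∀ a : A, f (f (f a)) = a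
  s_f : ∀ a : A, s (f a) = t a
  bar : A → A
  bar_src : ∀ a : A, s (bar a) = s a
  bar_ne : ∀ a : A, bar a ≠ a
  bar_unique : ∀ a b : A, s b = s a → b ≠ a → b = bar a

attribute [instance] TriangulationQuiver.fintypeV TriangulationQuiver.fintypeA

namespace TriangulationQuiver

variable (Q : TriangulationQuiver)

/-- The second permutation of arrows: `g α = \overline{f α}`. -/
def g (a : Q.A) : Q.A := Q.bar (Q.f a)

/-- The `g`-orbit of an arrow. -/
def gOrbit (a : Q.A) : Set Q.A := {b : Q.A | ∃ k : ℕ, Q.g^[k] a = b}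

/-- `n α` is the number of arrows in the `g`-orbit of `α`. -/
noncomputable def n (a : Q.A) : ℕ := (Q.gOrbit a).ncard

end TriangulationQuiver

namespace TriangulationQuiver

variable {Q : TriangulationQuiver}


lemma bar_bar (a : Q.A) : Q.bar (Q.bar a) = a :=
  (Q.bar_unique (Q.bar a) a (Q.bar_src a).symm (Ne.symm (Q.bar_ne a))).symm

lemma f_inj : Function.Injective Q.f :=
  Function.LeftInverse.injective (g := fun a => Q.f (Q.f a)) Q.f_cube

lemma bar_inj : Function.Injective Q.bar :=
  Function.LeftInverse.injective bar_bar

lemma g_inj : Function.Injective Q.g := fun a b h => f_inj (bar_inj h)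

lemma bar_g (a : Q.A) : Q.bar (Q.g a) = Q.f a := bar_bar _

lemma g_ff (a : Q.A) : Q.g (Q.f (Q.f a)) = Q.bar a := by
  unfold g; rw [Q.f_cube]

lemma s_g (a : Q.A) : Q.s (Q.g a) = Q.t a := by
  unfold g; rw [Q.bar_src, Q.s_f]

lemma g_bij : Function.Bijective Q.g :=
  (Finite.injective_iff_bijective).mp g_inj

lemma periodic (a : Q.A) : a ∈ Function.periodicPts Q.g := by
  classical
  set σ : Equiv.Perm Q.A := Equiv.ofBijective Q.g g_bij with hσ
  refine ⟨orderOf σ, orderOf_pos σ, ?_⟩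
  have hc : ∀ k : ℕ, Q.g^[k] a = (σ ^ k) a := by
    intro k
    induction k with
    | zero => simp
    | succ k ih => rw [Function.iterate_succ_apply', ih, pow_succ']; rfl
  show Q.g^[orderOf σ] a = a
  rw [hc, pow_orderOf_eq_one]; rfl

lemma n_eq_minimalPeriod (a : Q.A) : Q.n a = Function.minimalPeriod Q.g a := by
  classical
  have hm := Function.minimalPeriod_pos_of_mem_periodicPts (periodic a)
  set m := Function.minimalPeriod Q.g a with hmdef
  have horb : Q.gOrbit a = (fun k => Q.g^[k] a) '' Set.Iio m := by
    ext b
    constructor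
    · rintro ⟨k, rfl⟩
      exact ⟨k % m, Nat.mod_lt _ hm, Function.iterate_mod_minimalPeriod_eq⟩
    · rintro ⟨k, _, rfl⟩
      exact ⟨k, rfl⟩
  rw [n, horb, Set.ncard_image_of_injOn Function.iterate_injOn_Iio_minimalPeriod]
  rw [← Finset.coe_Iio, Set.ncard_coe_finset, Nat.card_Iio]

lemma g3_of_n3 {a : Q.A} (h : Q.n a = 3) : Q.g (Q.g (Q.g a)) = a := by
  have := Function.iterate_minimalPeriod (f := Q.g) (x := a)
  rw [← n_eq_minimalPeriod, h] at this
  simpa [Function.iterate_succ_apply'] using this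

lemma n3_of_g3 {a : Q.A} (h : Q.g (Q.g (Q.g a)) = a) (h1 : Q.g a ≠ a) : Q.n a = 3 := by
  have hp : Function.IsPeriodicPt Q.g 3 a := by
    show Q.g^[3] a = a
    simpa [Function.iterate_succ_apply'] using h
  have hd : Function.minimalPeriod Q.g a ∣ 3 := hp.minimalPeriod_dvd
  rcases (Nat.prime_three.eq_one_or_self_of_dvd _ hd) with h1' | h3'
  · exact absurd (Function.minimalPeriod_eq_one_iff_isFixedPt.mp h1') h1
  · rw [n_eq_minimalPeriod, h3']

/-- If `g` fixes an arrow and `g³ = id`, the quiver has at most two vertices. -/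
lemma no_fixed_point (h3 : 3 ≤ Fintype.card Q.V)
    (hg3 : ∀ x : Q.A, Q.g (Q.g (Q.g x)) = x) (a : Q.A) : Q.g a ≠ a := by
  classical
  intro hfix
  have hfa : Q.f a = Q.bar a := by
    have : Q.bar (Q.f a) = a := hfix
    rw [← bar_bar (Q.f a), this]
  have hta : Q.t a = Q.s a := by rw [← Q.s_f, hfa, Q.bar_src]
  set b := Q.bar a with hb
  have hsb : Q.s b = Q.s a := Q.bar_src a
  set c := Q.f b with hc
  have hfc : Q.f c = a := by rw [hc, ← hfa, Q.f_cube]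
  have htc : Q.t c = Q.s a := by rw [← Q.s_f, hfc]
  have hsc : Q.s c = Q.t b := Q.s_f b
  have hout : ∀ e, Q.s e = Q.s a → e = a ∨ e = b := by
    intro e he
    by_cases h : e = a
    · exact Or.inl h
    · exact Or.inr (Q.bar_unique a e he h)
  have hin : ∀ e, Q.t e = Q.s a → e = a ∨ e = c := by
    intro e he
    have : Q.s (Q.f e) = Q.s a := by rw [Q.s_f]; exact he
    rcases hout _ this with h | h
    · right
      rw [← Q.f_cube e, h, hfa]
    · left
      have : Q.f e = Q.f a := by rw [h, hfa]
      exact f_inj this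
  by_cases hwv : Q.t b = Q.s a
  · -- one-vertex case
    have hall : ∀ u, u = Q.s a := by
      intro u
      have hpath := Q.connected (Q.s a) u
      induction hpath with
      | refl => rfl
      | tail hp hstep ih =>
        rcases hstep with ⟨e, ⟨he1, he2⟩ | ⟨he1, he2⟩⟩
        · rw [ih] at he1
          rcases hout e he1 with rfl | rfl
          · rw [← he2, hta]
          · rw [← he2, hwv]
        · rw [ih] at he2
          rcases hin e he2 with rfl | rfl
          · rw [← he1]
          · rw [← he1, hsc, hwv]
    have : Fintype.card Q.V ≤ 1 :=
      Fintype.card_le_one_iff.mpr fun x y => (hall x).trans (hall y).symm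
    omega
  · -- two-vertex case
    set d := Q.bar c with hd
    have hgb : Q.g b = d := by show Q.bar (Q.f b) = d; rw [← hc, hd]
    have hgd : Q.g d = c := by
      have h1 : Q.g (Q.g d) = b := by rw [← hgb, hg3]
      have h2 : Q.f (Q.g d) = a := by
        rw [← bar_g (Q.g d), h1, hb, bar_bar]
      rw [← Q.f_cube (Q.g d), h2, hfa]
    have hfd : Q.f d = d := by
      have : Q.bar (Q.f d) = c := hgd
      rw [← bar_bar (Q.f d), this, ← hd]
    have hsd : Q.s d = Q.t b := by rw [hd, Q.bar_src, hsc]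
    have htd : Q.t d = Q.t b := by rw [← Q.s_f, hfd, hsd]
    have hout' : ∀ e, Q.s e = Q.t b → e = c ∨ e = d := by
      intro e he
      by_cases h : e = c
      · exact Or.inl h
      · exact Or.inr (Q.bar_unique c e (by rw [he, hsc]) h)
    have hin' : ∀ e, Q.t e = Q.t b → e = b ∨ e = d := by
      intro e he
      have : Q.s (Q.f e) = Q.t b := by rw [Q.s_f]; exact he
      rcases hout' _ this with h | h
      · exact Or.inl (f_inj (by rw [h, hc]))
      · exact Or.inr (f_inj (by rw [h, hfd]))
    have hall : ∀ u, u = Q.s a ∨ u = Q.t b := by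
      intro u
      have hpath := Q.connected (Q.s a) u
      induction hpath with
      | refl => exact Or.inl rfl
      | tail hp hstep ih =>
        rcases hstep with ⟨e, ⟨he1, he2⟩ | ⟨he1, he2⟩⟩
        · rcases ih with h | h
          · rw [h] at he1
            rcases hout e he1 with rfl | rfl
            · exact Or.inl (by rw [← he2, hta])
            · exact Or.inr he2.symm
          · rw [h] at he1
            rcases hout' e he1 with rfl | rfl
            · exact Or.inl (by rw [← he2, htc])
            · exact Or.inr (by rw [← he2, htd])
        · rcases ih with h | h
          · rw [h] at he2
            rcases hin e he2 with rfl | rfl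
            · exact Or.inl he1.symm
            · exact Or.inr (by rw [← he1, hsc])
          · rw [h] at he2
            rcases hin' e he2 with rfl | rfl
            · exact Or.inl (by rw [← he1, hsb])
            · exact Or.inr (by rw [← he1, hsd])
    have hsub : (Finset.univ : Finset Q.V) ⊆ {Q.s a, Q.t b} := by
      intro u _
      rcases hall u with h | h <;> simp [h]
    have : Fintype.card Q.V ≤ 2 := by
      calc Fintype.card Q.V = (Finset.univ : Finset Q.V).card := rfl
        _ ≤ ({Q.s a, Q.t b} : Finset Q.V).card := Finset.card_le_card hsub
        _ ≤ 2 := Finset.card_insert_le _ _ |>.trans (by simp)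
    omega


lemma bar_f (a : Q.A) : Q.bar (Q.f a) = Q.g a := rfl

lemma ffbar {x : Q.A} (h : Q.g (Q.g (Q.g x)) = x) :
    Q.f (Q.f (Q.bar x)) = Q.g (Q.g x) :=
  g_inj (by rw [g_ff, bar_bar, h])

lemma bar_gg {x : Q.A} (h : Q.g (Q.g (Q.g x)) = x) :
    Q.bar (Q.g (Q.g x)) = Q.g (Q.f (Q.bar x)) := by
  rw [← ffbar h]; rfl

end TriangulationQuiver

def TriangulationQuiver.inU (Q : TriangulationQuiver) (β x : Q.A) : Prop :=
  x = β ∨ x = Q.g β ∨ x = Q.g (Q.g β) ∨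
  x = Q.bar β ∨ x = Q.g (Q.bar β) ∨ x = Q.g (Q.g (Q.bar β)) ∨
  x = Q.f β ∨ x = Q.g (Q.f β) ∨ x = Q.g (Q.g (Q.f β)) ∨
  x = Q.f (Q.bar β) ∨ x = Q.g (Q.f (Q.bar β)) ∨ x = Q.g (Q.g (Q.f (Q.bar β)))

namespace TriangulationQuiver

variable {Q : TriangulationQuiver} {β : Q.A}

variable (hβ : Q.g (Q.g (Q.g β)) = β)
  (hβ' : Q.g (Q.g (Q.g (Q.bar β))) = Q.bar β)
  (hfβ : Q.g (Q.g (Q.g (Q.f β))) = Q.f β)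
  (hfβ' : Q.g (Q.g (Q.g (Q.f (Q.bar β)))) = Q.f (Q.bar β))

include hβ hβ' hfβ hfβ'

lemma inU_g {x : Q.A} (hx : Q.inU β x) : Q.inU β (Q.g x) := by
  rcases hx with rfl|rfl|rfl|rfl|rfl|rfl|rfl|rfl|rfl|rfl|rfl|rfl <;>
    (simp only [inU, hβ, hβ', hfβ, hfβ']; tauto)

lemma inU_bar {x : Q.A} (hx : Q.inU β x) : Q.inU β (Q.bar x) := by
  rcases hx with rfl|rfl|rfl|rfl|rfl|rfl|rfl|rfl|rfl|rfl|rfl|rfl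
  · simp only [inU]; tauto
  · rw [bar_g]; simp only [inU]; tauto
  · rw [bar_gg hβ]; simp only [inU]; tauto
  · rw [bar_bar]; simp only [inU]; tauto
  · rw [bar_g]; simp only [inU]; tauto
  · rw [bar_gg hβ', bar_bar]; simp only [inU]; tauto
  · rw [bar_f]; simp only [inU]; tauto
  · have h8 : Q.f (Q.f β) = Q.g (Q.g (Q.bar β)) := by
      have := ffbar hβ'; rwa [bar_bar] at this
    rw [bar_g, h8]; simp only [inU]; tauto
  · rw [bar_gg hfβ, bar_f, ← bar_g (Q.g β), bar_gg hβ]; simp only [inU]; tauto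
  · rw [bar_f]; simp only [inU]; tauto
  · rw [bar_g, ffbar hβ]; simp only [inU]; tauto
  · rw [bar_gg hfβ', bar_f, ← bar_g (Q.g (Q.bar β)), bar_gg hβ', bar_bar]
    simp only [inU]; tauto

lemma inU_f {x : Q.A} (hx : Q.inU β x) : Q.inU β (Q.f x) := by
  rw [← bar_g x]
  exact inU_bar hβ hβ' hfβ hfβ' (inU_g hβ hβ' hfβ hfβ' hx)

lemma g3_of_four : ∀ a : Q.A, Q.g (Q.g (Q.g a)) = a := by
  have hsrc : ∀ x, Q.inU β x → ∀ e, Q.s e = Q.s x → Q.inU β e := by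
    intro x hx e he
    by_cases h : e = x
    · rwa [h]
    · rw [Q.bar_unique x e he h]; exact inU_bar hβ hβ' hfβ hfβ' hx
  have hv : ∀ u, ∃ x, Q.inU β x ∧ Q.s x = u := by
    intro u
    have hpath := Q.connected (Q.s β) u
    induction hpath with
    | refl => exact ⟨β, Or.inl rfl, rfl⟩
    | tail hp hstep ih =>
      obtain ⟨x, hx, hsx⟩ := ih
      rcases hstep with ⟨e, ⟨he1, he2⟩ | ⟨he1, he2⟩⟩
      · have he : Q.inU β e := hsrc x hx e (he1.trans hsx.symm)
        exact ⟨Q.g e, inU_g hβ hβ' hfβ hfβ' he, by rw [s_g, he2]⟩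
      · have hfe : Q.inU β (Q.f e) := hsrc x hx (Q.f e) (by rw [Q.s_f, he2, ← hsx])
        have he : Q.inU β e := by
          rw [← Q.f_cube e]
          exact inU_f hβ hβ' hfβ hfβ' (inU_f hβ hβ' hfβ hfβ' hfe)
        exact ⟨e, he, he1⟩
  intro a
  obtain ⟨x, hx, hsx⟩ := hv (Q.s a)
  have ha : Q.inU β a := hsrc x hx a hsx.symm
  rcases ha with rfl|rfl|rfl|rfl|rfl|rfl|rfl|rfl|rfl|rfl|rfl|rfl <;>
    simp only [hβ, hβ', hfβ, hfβ']

end TriangulationQuiver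


/-- Lemma 6.6 (equivalence of (ii), (iii), (iv)): for a triangulation quiver with at
least three vertices, the following are equivalent: every arrow has `n_α = 3`;
`g³` is the identity on the arrows; there is an arrow `β` with
`n_β = n_{β̄} = n_{f(β)} = n_{f(β̄)} = 3`. -/
theorem stmt_0 (Q : TriangulationQuiver) (h3 : 3 ≤ Fintype.card Q.V) :
    List.TFAE [
      (∀ a : Q.A, Q.n a = 3),
      (∀ a : Q.A, Q.g (Q.g (Q.g a)) = a),
      (∃ b : Q.A, Q.n b = 3 ∧ Q.n (Q.bar b) = 3 ∧ Q.n (Q.f b) = 3 ∧ Q.n (Q.f (Q.bar b)) = 3)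
    ] := by
  open TriangulationQuiver in
  have hA : Nonempty Q.A := by
    have hv : Nonempty Q.V := Fintype.card_pos_iff.mp (by omega)
    obtain ⟨v⟩ := hv
    have h2 := Q.two_regular_src v
    have hne : {a : Q.A | Q.s a = v}.Nonempty :=
      Set.nonempty_of_ncard_ne_zero (by omega)
    exact ⟨hne.choose⟩
  tfae_have 1 → 2 := fun h1 a => TriangulationQuiver.g3_of_n3 (h1 a)
  tfae_have 2 → 1 := fun h2 a =>
    TriangulationQuiver.n3_of_g3 (h2 a) (TriangulationQuiver.no_fixed_point h3 h2 a)
  tfae_have 1 → 3 := by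
    intro h1
    obtain ⟨b⟩ := hA
    exact ⟨b, h1 b, h1 _, h1 _, h1 _⟩
  tfae_have 3 → 2 := by
    rintro ⟨b, hb, hb', hfb, hfb'⟩
    exact TriangulationQuiver.g3_of_four (TriangulationQuiver.g3_of_n3 hb)
      (TriangulationQuiver.g3_of_n3 hb') (TriangulationQuiver.g3_of_n3 hfb)
      (TriangulationQuiver.g3_of_n3 hfb')
  tfae_finish
end

section
/- Let (Q, f) be a triangulation quiver with at least three vertices, and let β be an arrow whose g-orbit has exactly 3 elements, i.e., n_β = 3. Then β is not a loop. (Step in the proof of Lemma 6.6, implication (iv) ⇒ (i).) -/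
/-- In a set of `ncard` two containing two distinct elements, every element is one of them. -/
lemma mem_pair_of_ncard_two {A : Type} [Fintype A] {S : Set A} (h : S.ncard = 2)
    {a b : A} (hab : a ≠ b) (ha : a ∈ S) (hb : b ∈ S) {c : A} (hc : c ∈ S) :
    c = a ∨ c = b := by
  have hsub : ({a, b} : Set A) ⊆ S := by
    intro x hx; rcases hx with rfl | rfl
    · exact ha
    · exact hb
  have hcard : ({a, b} : Set A).ncard = 2 := Set.ncard_pair hab
  have heq : ({a, b} : Set A) = S :=
    Set.eq_of_subset_of_ncard_le hsub (by rw [h, hcard]) (Set.toFinite S)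
  rw [← heq] at hc
  exact hc

/-- If the forward orbit of `b` under an injective map has exactly 3 elements,
then `g^[3] b = b`. -/
lemma iterate_three_of_ncard_orbit_three {A : Type} [Fintype A] {g : A → A}
    (hinj : Function.Injective g) (b : A)
    (h : {c | ∃ k : ℕ, g^[k] b = c}.ncard = 3) : g^[3] b = b := by
  classical
  set S := {c | ∃ k : ℕ, g^[k] b = c} with hS
  have key : ∀ d : ℕ, 0 < d → g^[d] b = b → 3 ≤ d := by
    intro d hd hper
    have hper' : Function.IsPeriodicPt g d b := hper
    have hsub : S ⊆ (fun k => g^[k] b) '' (Set.Iio d) := by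
      rintro c ⟨k, rfl⟩
      exact ⟨k % d, Nat.mod_lt _ hd, hper'.iterate_mod_apply k⟩
    have h1 : S.ncard ≤ ((fun k => g^[k] b) '' (Set.Iio d)).ncard :=
      Set.ncard_le_ncard hsub (Set.Finite.image _ (Set.finite_Iio d))
    have h2 : ((fun k => g^[k] b) '' (Set.Iio d)).ncard ≤ (Set.Iio d).ncard :=
      Set.ncard_image_le (Set.finite_Iio d)
    have h3 : (Set.Iio d).ncard = d := by
      rw [← Finset.coe_Iio, Set.ncard_coe_finset, Nat.card_Iio]
    omega
  -- pigeonhole on b, g b, g² b, g³ b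
  haveI : Fintype S := (Set.toFinite S).fintype
  have hcS : Fintype.card S = 3 := by
    rw [← Nat.card_eq_fintype_card, Nat.card_coe_set_eq, h]
  obtain ⟨i, j, hne, heq⟩ := Fintype.exists_ne_map_eq_of_card_lt
    (fun k : Fin 4 => (⟨g^[(k : ℕ)] b, ⟨(k : ℕ), rfl⟩⟩ : S)) (by rw [hcS]; simp)
  have heq' : g^[(i : ℕ)] b = g^[(j : ℕ)] b := congrArg Subtype.val heq
  have main : ∀ i j : ℕ, i < j → j ≤ 3 → g^[i] b = g^[j] b → g^[3] b = b := by
    intro i j hij hj3 hij'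
    have hsplit : g^[j] b = g^[i] (g^[j - i] b) := by
      rw [← Function.iterate_add_apply, Nat.add_sub_cancel' hij.le]
    have hd : g^[j - i] b = b := by
      have := (hinj.iterate i) (hij'.trans hsplit).symm
      exact this
    have h3d : 3 ≤ j - i := key (j - i) (by omega) hd
    have : j - i = 3 := by omega
    rwa [this] at hd
  rcases Ne.lt_or_gt hne with hlt | hlt
  · exact main i j hlt (by omega) heq'
  · exact main j i hlt (by omega) heq'.symm

/-- Step in the proof of Lemma 6.6, (iv) ⇒ (i): in a triangulation quiver with at least
three vertices, an arrow whose `g`-orbit has exactly 3 elements is not a loop. -/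
theorem stmt_4 (Q : TriangulationQuiver) (h3 : 3 ≤ Fintype.card Q.V)
    (b : Q.A) (hb : Q.n b = 3) :
    Q.s b ≠ Q.t b := by
  classical
  intro hloop
  have barbar : ∀ a : Q.A, Q.bar (Q.bar a) = a := fun a =>
    (Q.bar_unique (Q.bar a) a (Q.bar_src a).symm (Ne.symm (Q.bar_ne a))).symm
  have hginj : Function.Injective Q.g := by
    have hli : Function.LeftInverse (fun a => Q.f (Q.f (Q.bar a))) Q.g := by
      intro a
      show Q.f (Q.f (Q.bar (Q.bar (Q.f a)))) = a
      rw [barbar]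
      exact Q.f_cube a
    exact hli.injective
  have src_class : ∀ a c : Q.A, Q.s c = Q.s a → c = a ∨ c = Q.bar a := by
    intro a c hsc
    by_cases hca : c = a
    · exact Or.inl hca
    · exact Or.inr (Q.bar_unique a c hsc hca)
  set x := Q.s b with hx
  have htb : Q.t b = x := hloop.symm
  have hfb : Q.f b = b ∨ Q.f b = Q.bar b :=
    src_class b (Q.f b) (by rw [Q.s_f, htb, hx])
  rcases hfb with hfb | hfb
  · -- Case: f b = b
    have hb' : {c | ∃ k : ℕ, Q.g^[k] b = c}.ncard = 3 := hb
    have hg3 : Q.g (Q.g (Q.g b)) = b := iterate_three_of_ncard_orbit_three hginj b hb'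
    have hgb : Q.g b = Q.bar b := by rw [TriangulationQuiver.g, hfb]
    set y := Q.t (Q.bar b) with hy
    set d := Q.f (Q.bar b) with hd
    have hsd : Q.s d = y := by rw [hd, Q.s_f, hy]
    set e := Q.bar d with he
    have hse : Q.s e = y := by rw [he, Q.bar_src, hsd]
    have hg2 : Q.g (Q.bar b) = e := by rw [TriangulationQuiver.g, ← hd, ← he]
    have hg3' : Q.g e = b := by rwa [hgb, hg2] at hg3
    have hfe : Q.f e = Q.bar b := by
      have h' := congrArg Q.bar hg3'
      rw [show Q.g e = Q.bar (Q.f e) from rfl, barbar] at h'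
      exact h'
    have hsbar : Q.s (Q.bar b) = x := by rw [Q.bar_src, hx]
    have hte : Q.t e = x := by rw [← Q.s_f, hfe, hsbar]
    by_cases hxy : y = x
    · -- degenerate: bar b is a loop at x too
      have htbar : Q.t (Q.bar b) = x := by rw [← hy, hxy]
      have tgt_class : ∀ a : Q.A, Q.t a = x → a = b ∨ a = Q.bar b := by
        intro a hta
        exact mem_pair_of_ncard_two (Q.two_regular_tgt x) (Ne.symm (Q.bar_ne b))
          htb htbar hta
      have hV : ∀ v : Q.V, v = x := by
        intro v
        have hconn := Q.connected x v
        induction hconn with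
        | refl => rfl
        | tail _ hstep ih =>
          obtain ⟨a, ⟨hsa, hta⟩ | ⟨hsa, hta⟩⟩ := hstep
          · rw [ih] at hsa
            rcases src_class b a (by rw [hsa, hx]) with rfl | rfl
            · rw [← hta, htb]
            · rw [← hta, htbar]
          · rw [ih] at hta
            rcases tgt_class a hta with rfl | rfl
            · rw [← hsa, hx]
            · rw [← hsa, hsbar]
      have hsub : (Finset.univ : Finset Q.V) ⊆ {x} := fun v _ => by
        rw [hV v]; simp
      have hle := Finset.card_le_card hsub
      rw [Finset.card_univ, Finset.card_singleton] at hle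
      omega
    · -- main case: y ≠ x
      have hbe : b ≠ e := fun hbe => hxy (by rw [← hse, ← hbe, ← hx])
      have tgt_class_x : ∀ a : Q.A, Q.t a = x → a = b ∨ a = e := by
        intro a hta
        exact mem_pair_of_ncard_two (Q.two_regular_tgt x) hbe htb hte hta
      have hffd : Q.f (Q.f d) = Q.bar b := by
        rw [hd]; exact Q.f_cube (Q.bar b)
      have htfd : Q.t (Q.f d) = x := by rw [← Q.s_f, hffd, hsbar]
      have htd : Q.t d = y := by
        rcases tgt_class_x (Q.f d) htfd with hfd | hfd
        · exfalso
          rw [hfd, hfb] at hffd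
          exact Q.bar_ne b hffd.symm
        · rw [← Q.s_f, hfd, hse]
      have hbard : Q.bar b ≠ d := fun hh => hxy (by rw [← hsd, ← hh, hsbar])
      have tgt_class_y : ∀ a : Q.A, Q.t a = y → a = Q.bar b ∨ a = d := by
        intro a hta
        exact mem_pair_of_ncard_two (Q.two_regular_tgt y) hbard (show Q.t (Q.bar b) = y from hy.symm) htd hta
      have hV : ∀ v : Q.V, v = x ∨ v = y := by
        intro v
        have hconn := Q.connected x v
        induction hconn with
        | refl => exact Or.inl rfl
        | tail _ hstep ih =>
          obtain ⟨a, ⟨hsa, hta⟩ | ⟨hsa, hta⟩⟩ := hstep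
          · rcases ih with hu | hu
            · rw [hu] at hsa
              rcases src_class b a (by rw [hsa, hx]) with rfl | rfl
              · exact Or.inl (by rw [← hta, htb])
              · exact Or.inr (by rw [← hta, hy])
            · rw [hu] at hsa
              rcases src_class d a (by rw [hsa, hsd]) with rfl | rfl
              · exact Or.inr (by rw [← hta, htd])
              · exact Or.inl (by rw [← hta, ← he, hte])
          · rcases ih with hu | hu
            · rw [hu] at hta
              rcases tgt_class_x a hta with rfl | rfl
              · exact Or.inl (by rw [← hsa, hx])
              · exact Or.inr (by rw [← hsa, hse])
            · rw [hu] at hta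
              rcases tgt_class_y a hta with rfl | rfl
              · exact Or.inl (by rw [← hsa, hsbar])
              · exact Or.inr (by rw [← hsa, hsd])
      have hsub : (Finset.univ : Finset Q.V) ⊆ {x, y} := fun v _ => by
        rcases hV v with rfl | rfl <;> simp
      have hle := Finset.card_le_card hsub
      have hc2 : ({x, y} : Finset Q.V).card ≤ 2 := by
        have := Finset.card_insert_le x ({y} : Finset Q.V)
        simpa using this
      rw [Finset.card_univ] at hle
      omega
  · -- Case: f b = bar b, so g b = b and the orbit is a singleton
    have hgb : Q.g b = b := by rw [TriangulationQuiver.g, hfb, barbar]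
    have horb : Q.gOrbit b = {b} := by
      ext c
      constructor
      · rintro ⟨k, rfl⟩
        exact Function.iterate_fixed hgb k
      · rintro rfl
        exact ⟨0, rfl⟩
    rw [TriangulationQuiver.n, horb, Set.ncard_singleton] at hb
    omega
end

section
/- Let (Q, f) be a triangulation quiver with at least three vertices, and let β be an arrow with n_β = 3 and n_{β̄} = 3. Then β does not belong to a 2-cycle: there is no arrow γ with s(γ) = t(β) and t(γ) = s(β). (Step in the proof of Lemma 6.6, implication (iv) ⇒ (i).) -/
section Helpers
variable (Q : TriangulationQuiver)

lemma bar_bar (a : Q.A) : Q.bar (Q.bar a) = a :=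
  (Q.bar_unique (Q.bar a) a (Q.bar_src a).symm (Q.bar_ne a).symm).symm

lemma out_eq {a b : Q.A} (h : Q.s b = Q.s a) : b = a ∨ b = Q.bar a := by
  by_cases hb : b = a
  · exact Or.inl hb
  · exact Or.inr (Q.bar_unique a b h hb)

lemma f_inj : Function.Injective Q.f := by
  intro a b h
  have := congrArg (fun x => Q.f (Q.f x)) h
  simpa [Q.f_cube] using this

lemma bar_inj : Function.Injective Q.bar :=
  Function.LeftInverse.injective (bar_bar Q)

lemma g_inj : Function.Injective Q.g := by
  intro a b h
  exact f_inj Q (bar_inj Q h)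

lemma s_g (a : Q.A) : Q.s (Q.g a) = Q.t a := by
  show Q.s (Q.bar (Q.f a)) = Q.t a
  rw [Q.bar_src, Q.s_f]

lemma into_eq {v : Q.V} {u w z : Q.A} (hu : Q.t u = v) (hw : Q.t w = v) (hz : Q.t z = v)
    (hne : u ≠ w) : z = u ∨ z = w := by
  have h2 : Q.s (Q.f w) = Q.s (Q.f u) := by rw [Q.s_f, Q.s_f, hw, hu]
  have h3 : Q.s (Q.f z) = Q.s (Q.f u) := by rw [Q.s_f, Q.s_f, hz, hu]
  have hw' : Q.f w = Q.bar (Q.f u) := by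
    rcases out_eq Q h2 with h | h
    · exact absurd (f_inj Q h) hne.symm
    · exact h
  rcases out_eq Q h3 with h | h
  · exact Or.inl (f_inj Q h)
  · exact Or.inr (f_inj Q (h.trans hw'.symm))

lemma period_facts (a : Q.A) (h : Q.n a = 3) :
    Q.g (Q.g (Q.g a)) = a ∧ Q.g a ≠ a ∧ Q.g (Q.g a) ≠ a := by
  classical
  have h' : (Q.gOrbit a).ncard = 3 := h
  have hmem : ∀ k, Q.g^[k] a ∈ Q.gOrbit a := fun k => ⟨k, rfl⟩
  have hg1 : Q.g a ≠ a := by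
    intro hg
    have hall : ∀ k, Q.g^[k] a = a := by
      intro k; induction k with
      | zero => rfl
      | succ m ih => rw [Function.iterate_succ_apply', ih, hg]
    have heq : Q.gOrbit a = {a} := by
      ext x
      constructor
      · rintro ⟨k, rfl⟩; simp [hall k]
      · intro hx; exact ⟨0, (Set.mem_singleton_iff.mp hx).symm⟩
    rw [heq, Set.ncard_singleton] at h'
    omega
  have hg2 : Q.g (Q.g a) ≠ a := by
    intro hg
    have hall : ∀ k, Q.g^[k] a = a ∨ Q.g^[k] a = Q.g a := by
      intro k; induction k with
      | zero => exact Or.inl rfl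
      | succ m ih =>
        rw [Function.iterate_succ_apply']
        rcases ih with h0 | h0
        · rw [h0]; exact Or.inr rfl
        · rw [h0]; exact Or.inl hg
    have hsub : Q.gOrbit a ⊆ {a, Q.g a} := by
      rintro x ⟨k, rfl⟩; rcases hall k with h0 | h0 <;> simp [h0]
    have hle := Set.ncard_le_ncard hsub (Set.toFinite _)
    have h2 : ({a, Q.g a} : Set Q.A).ncard ≤ 2 := by
      refine le_trans (Set.ncard_insert_le _ _) ?_
      simp
    omega
  refine ⟨?_, hg1, hg2⟩
  by_contra hg3
  have hit2 : Q.g^[2] a = Q.g (Q.g a) := rfl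
  have hit3 : Q.g^[3] a = Q.g (Q.g (Q.g a)) := rfl
  have key : ∀ i, (i = 1 ∨ i = 2 ∨ i = 3) → Q.g^[i] a ≠ a := by
    intro i hi
    rcases hi with rfl | rfl | rfl
    · simpa using hg1
    · rw [hit2]; exact hg2
    · rw [hit3]; exact hg3
  have dist : ∀ i j, i < j → j ≤ 3 → Q.g^[i] a ≠ Q.g^[j] a := by
    intro i j hij hj3 heq
    have h1 : Q.g^[i] a = Q.g^[i] (Q.g^[j - i] a) := by
      rw [← Function.iterate_add_apply, Nat.add_sub_cancel' hij.le]
      exact heq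
    have h2 : Q.g^[j - i] a = a := (((g_inj Q).iterate i) h1).symm
    exact key (j - i) (by omega) h2
  have d01 : a ≠ Q.g^[1] a := by simpa using dist 0 1 (by omega) (by omega)
  have d02 : a ≠ Q.g^[2] a := by simpa using dist 0 2 (by omega) (by omega)
  have d03 : a ≠ Q.g^[3] a := by simpa using dist 0 3 (by omega) (by omega)
  have d12 : Q.g^[1] a ≠ Q.g^[2] a := dist 1 2 (by omega) (by omega)
  have d13 : Q.g^[1] a ≠ Q.g^[3] a := dist 1 3 (by omega) (by omega)
  have d23 : Q.g^[2] a ≠ Q.g^[3] a := dist 2 3 (by omega) (by omega)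
  have hsub : (↑({a, Q.g^[1] a, Q.g^[2] a, Q.g^[3] a} : Finset Q.A) : Set Q.A) ⊆ Q.gOrbit a := by
    intro x hx
    simp only [Finset.coe_insert, Finset.coe_singleton, Set.mem_insert_iff,
      Set.mem_singleton_iff] at hx
    rcases hx with rfl | rfl | rfl | rfl
    · exact ⟨0, rfl⟩
    · exact hmem 1
    · exact hmem 2
    · exact hmem 3
  have hcard : ({a, Q.g^[1] a, Q.g^[2] a, Q.g^[3] a} : Finset Q.A).card = 4 := by
    rw [Finset.card_insert_of_notMem
        (by simp only [Finset.mem_insert, Finset.mem_singleton, not_or]; exact ⟨d01, d02, d03⟩),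
      Finset.card_insert_of_notMem
        (by simp only [Finset.mem_insert, Finset.mem_singleton, not_or]; exact ⟨d12, d13⟩),
      Finset.card_insert_of_notMem (by simpa using d23), Finset.card_singleton]
  have hle := Set.ncard_le_ncard hsub (Set.toFinite _)
  rw [Set.ncard_coe_finset, hcard] at hle
  omega

lemma card_le_two_absurd (x y : Q.V) (h3 : 3 ≤ Fintype.card Q.V)
    (hcl : ∀ a : Q.A, (Q.s a = x ∨ Q.s a = y) → (Q.t a = x ∨ Q.t a = y))
    (hcl' : ∀ a : Q.A, (Q.t a = x ∨ Q.t a = y) → (Q.s a = x ∨ Q.s a = y)) : False := by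
  classical
  have hall : ∀ v : Q.V, v = x ∨ v = y := by
    intro v
    have h := Q.connected x v
    induction h with
    | refl => exact Or.inl rfl
    | tail h1 h2 ih =>
      obtain ⟨a, h | h⟩ := h2
      · have := hcl a (by rw [h.1]; exact ih)
        rw [← h.2]; exact this
      · have := hcl' a (by rw [h.2]; exact ih)
        rw [← h.1]; exact this
  have hsub : (Finset.univ : Finset Q.V) ⊆ {x, y} := by
    intro v _
    rcases hall v with rfl | rfl <;> simp
  have hle := Finset.card_le_card hsub
  rw [Finset.card_univ] at hle
  have h2 : ({x, y} : Finset Q.V).card ≤ 2 := by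
    refine le_trans (Finset.card_insert_le _ _) ?_
    simp
  omega

end Helpers

/-- Step in the proof of Lemma 6.6, (iv) ⇒ (i): in a triangulation quiver with at least
three vertices, an arrow `β` with `n_β = 3` and `n_{β̄} = 3` does not belong to a
2-cycle: there is no arrow `γ` with `s(γ) = t(β)` and `t(γ) = s(β)`. -/
theorem stmt_5 (Q : TriangulationQuiver) (h3 : 3 ≤ Fintype.card Q.V)
    (b : Q.A) (hb : Q.n b = 3) (hbb : Q.n (Q.bar b) = 3) :
    ¬ ∃ c : Q.A, Q.s c = Q.t b ∧ Q.t c = Q.s b := by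
  classical
  rintro ⟨c, hc1, hc2⟩
  obtain ⟨hg3, hg1, hg2⟩ := period_facts Q b hb
  have hcb : Q.s c = Q.s (Q.f b) := by rw [Q.s_f]; exact hc1
  rcases out_eq Q hcb with hcase | hcase
  · -- Case B: c = f b
    have htfb : Q.t (Q.f b) = Q.s b := hcase ▸ hc2
    have h1 : Q.s (Q.f (Q.f b)) = Q.s b := by rw [Q.s_f]; exact htfb
    rcases out_eq Q h1 with h' | h'
    · -- f²b = b, so f b = b
      have hfb : Q.f b = b := by
        have h2 := congrArg Q.f h'
        rw [Q.f_cube] at h2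
        exact h2.symm
      have hts : Q.t b = Q.s b := by rw [← Q.s_f, hfb]
      have hgb : Q.g b = Q.bar b := by
        show Q.bar (Q.f b) = Q.bar b
        rw [hfb]
      have hgd : Q.g (Q.g (Q.bar b)) = b := by rw [← hgb]; exact hg3
      have hsd : Q.s (Q.g (Q.bar b)) = Q.t (Q.bar b) := s_g Q (Q.bar b)
      have htd : Q.t (Q.g (Q.bar b)) = Q.s b := by
        rw [← s_g Q (Q.g (Q.bar b)), hgd]
      have hbd : b ≠ Q.g (Q.bar b) := by
        intro h
        apply hg2
        rw [hgb, ← h]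
      have hbard : Q.bar (Q.g (Q.bar b)) = Q.f (Q.bar b) := bar_bar Q (Q.f (Q.bar b))
      refine card_le_two_absurd Q (Q.s b) (Q.t (Q.bar b)) h3 ?_ ?_
      · intro a ha
        rcases ha with ha | ha
        · rcases out_eq Q (show Q.s a = Q.s b from ha) with rfl | rfl
          · exact Or.inl hts
          · exact Or.inr rfl
        · rcases out_eq Q (show Q.s a = Q.s (Q.g (Q.bar b)) by rw [hsd]; exact ha) with rfl | rfl
          · exact Or.inl htd
          · have hff : Q.t (Q.f (Q.f (Q.bar b))) = Q.s b := by
              rw [← Q.s_f, Q.f_cube, Q.bar_src]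
            rcases into_eq Q hts htd hff hbd with h2 | h2
            · exact Or.inl (by rw [hbard, ← Q.s_f (Q.f (Q.bar b)), h2])
            · exact Or.inr (by rw [hbard, ← Q.s_f (Q.f (Q.bar b)), h2, hsd])
      · intro a ha
        rcases ha with ha | ha
        · rcases into_eq Q hts htd ha hbd with rfl | rfl
          · exact Or.inl rfl
          · exact Or.inr hsd
        · have hfa : Q.s (Q.f a) = Q.s (Q.f (Q.bar b)) := by rw [Q.s_f, Q.s_f, ha]
          rcases out_eq Q hfa with h2 | h2
          · exact Or.inl (by rw [f_inj Q h2, Q.bar_src])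
          · have hfa2 : Q.f a = Q.g (Q.bar b) := h2
            have ha2 : a = Q.f (Q.f (Q.g (Q.bar b))) := by
              have h4 := congrArg (fun x => Q.f (Q.f x)) hfa2
              simpa [Q.f_cube] using h4
            have hsa : Q.s a = Q.t (Q.f (Q.g (Q.bar b))) := by rw [ha2, Q.s_f]
            have hsfd : Q.s (Q.f (Q.g (Q.bar b))) = Q.s b := by rw [Q.s_f]; exact htd
            rcases out_eq Q hsfd with h4 | h4
            · exact Or.inl (by rw [hsa, h4, hts])
            · exact Or.inr (by rw [hsa, h4])
    · -- f²b = bar b : then g (bar b) = bar b, contradicting n (bar b) = 3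
      obtain ⟨_, hgbb1, _⟩ := period_facts Q (Q.bar b) hbb
      apply hgbb1
      show Q.bar (Q.f (Q.bar b)) = Q.bar b
      rw [← h', Q.f_cube, h']
  · -- Case A: c = bar (f b) = g b
    have hcg : c = Q.g b := hcase
    have htgb : Q.t (Q.g b) = Q.s b := by rw [← hcg]; exact hc2
    have h1 : Q.s (Q.g (Q.g b)) = Q.s b := by rw [s_g]; exact htgb
    rcases out_eq Q h1 with h' | h'
    · exact hg2 h'
    · have hgbar : Q.g (Q.bar b) = b := by rw [← h']; exact hg3
      have htbar : Q.t (Q.bar b) = Q.s b := by rw [← s_g Q (Q.bar b), hgbar]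
      have hbargb : Q.bar b ≠ Q.g b := by
        intro h
        apply hg2
        have h4 := congrArg Q.g h
        rw [hgbar] at h4
        exact h4.symm
      refine card_le_two_absurd Q (Q.s b) (Q.t b) h3 ?_ ?_
      · intro a ha
        rcases ha with ha | ha
        · rcases out_eq Q (show Q.s a = Q.s b from ha) with rfl | rfl
          · exact Or.inr rfl
          · exact Or.inl htbar
        · rcases out_eq Q (show Q.s a = Q.s (Q.f b) by rw [Q.s_f]; exact ha) with rfl | rfl
          · have hffb : Q.t (Q.f (Q.f b)) = Q.s b := by
              rw [← Q.s_f, Q.f_cube]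
            rcases into_eq Q htbar htgb hffb hbargb with h2 | h2
            · exact Or.inl (by rw [← Q.s_f (Q.f b), h2, Q.bar_src])
            · exact Or.inr (by rw [← Q.s_f (Q.f b), h2, s_g])
          · exact Or.inl htgb
      · intro a ha
        rcases ha with ha | ha
        · rcases into_eq Q htbar htgb ha hbargb with rfl | rfl
          · exact Or.inl (Q.bar_src b)
          · exact Or.inr (s_g Q b)
        · have hfa : Q.s (Q.f a) = Q.s (Q.f b) := by rw [Q.s_f, Q.s_f, ha]
          rcases out_eq Q hfa with h2 | h2
          · exact Or.inl (by rw [f_inj Q h2])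
          · have hfa2 : Q.f a = Q.g b := h2
            have ha2 : a = Q.f (Q.f (Q.g b)) := by
              have h4 := congrArg (fun x => Q.f (Q.f x)) hfa2
              simpa [Q.f_cube] using h4
            have hsa : Q.s a = Q.t (Q.f (Q.g b)) := by rw [ha2, Q.s_f]
            have hsfgb : Q.s (Q.f (Q.g b)) = Q.s b := by rw [Q.s_f]; exact htgb
            rcases out_eq Q hsfgb with h4 | h4
            · exact Or.inr (by rw [hsa, h4])
            · exact Or.inl (by rw [hsa, h4]; exact htbar)
end

section
/- Let (Q, f) be a triangulation quiver with at least three vertices such that exactly one f-orbit of arrows has three elements (equivalently, there is exactly one f-orbit of length 3 and every arrow outside it is fixed by f). Then Q has exactly three vertices and six arrows: there are three pairwise distinct vertices a, b, c with Q₀ = {a, b, c}, the f-orbit of length 3 consists of three arrows a → b, b → c, c → a, and the remaining three arrows are loops at a, b and c, each fixed by f. (Base case in the proof of Theorem 4.11: a triangulation quiver with n(Q,f) = 1 is the triangulation quiver of Example 4.3.) -/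
namespace TriangulationQuiver

variable (Q : TriangulationQuiver)

/-- The `f`-orbit of an arrow. -/
def fOrbit (a : Q.A) : Set Q.A := {b : Q.A | ∃ k : ℕ, Q.f^[k] a = b}

end TriangulationQuiver

/-- Base case in the proof of Theorem 4.11: a triangulation quiver with at least three
vertices having exactly one `f`-orbit with three elements has exactly three vertices
`a, b, c` and six arrows: the `f`-orbit of length 3 consists of three arrows `a → b`,
`b → c`, `c → a` cyclically permuted by `f`, and the remaining three arrows are loops at
`a`, `b` and `c`, each fixed by `f`. -/
theorem stmt_11 (Q : TriangulationQuiver) (h3 : 3 ≤ Fintype.card Q.V)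
    (huniq : ∃ a : Q.A, (Q.fOrbit a).ncard = 3 ∧
      ∀ b : Q.A, (Q.fOrbit b).ncard = 3 → Q.fOrbit b = Q.fOrbit a) :
    Fintype.card Q.V = 3 ∧ Fintype.card Q.A = 6 ∧
    ∃ (a b c : Q.V), a ≠ b ∧ a ≠ c ∧ b ≠ c ∧ (∀ v : Q.V, v = a ∨ v = b ∨ v = c) ∧
      ∃ (x y z la lb lc : Q.A),
        Q.s x = a ∧ Q.t x = b ∧ Q.s y = b ∧ Q.t y = c ∧ Q.s z = c ∧ Q.t z = a ∧
        Q.f x = y ∧ Q.f y = z ∧ Q.f z = x ∧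
        Q.s la = a ∧ Q.t la = a ∧ Q.f la = la ∧
        Q.s lb = b ∧ Q.t lb = b ∧ Q.f lb = lb ∧
        Q.s lc = c ∧ Q.t lc = c ∧ Q.f lc = lc ∧
        (∀ w : Q.A, w = x ∨ w = y ∨ w = z ∨ w = la ∨ w = lb ∨ w = lc) := by
  
  obtain ⟨x, hx3, hxuniq⟩ := huniq
  have finj : Function.Injective Q.f := fun a b h => by
    have h2 := congrArg Q.f (congrArg Q.f h)
    rwa [Q.f_cube, Q.f_cube] at h2
  have horb : ∀ w : Q.A, ∀ k : ℕ, Q.f^[k] w ∈ ({w, Q.f w, Q.f (Q.f w)} : Set Q.A) := by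
    intro w k
    induction k with
    | zero => exact Or.inl rfl
    | succ n ih =>
      rw [Function.iterate_succ_apply']
      rcases ih with h | h | h
      · rw [h]; exact Or.inr (Or.inl rfl)
      · rw [h]; exact Or.inr (Or.inr rfl)
      · rw [h, Q.f_cube]; exact Or.inl rfl
  have hfOrb : ∀ w : Q.A, Q.fOrbit w = {w, Q.f w, Q.f (Q.f w)} := by
    intro w
    ext b
    constructor
    · rintro ⟨k, rfl⟩; exact horb w k
    · rintro (rfl | rfl | rfl)
      exacts [⟨0, rfl⟩, ⟨1, rfl⟩, ⟨2, rfl⟩]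
  have hne3 : ∀ w : Q.A, Q.f w ≠ w → (Q.fOrbit w).ncard = 3 := by
    intro w hw
    rw [hfOrb w]
    apply Set.ncard_eq_three.mpr
    refine ⟨w, Q.f w, Q.f (Q.f w), Ne.symm hw, ?_, ?_, rfl⟩
    · intro h
      have h2 := Q.f_cube w
      rw [← h] at h2
      exact hw h2
    · intro h
      exact hw (finj h).symm
  have hfx : Q.f x ≠ x := by
    intro h
    have hiter : ∀ k, Q.f^[k] x = x := by
      intro k
      induction k with
      | zero => rfl
      | succ n ih => rw [Function.iterate_succ_apply', ih, h]
    have hs : Q.fOrbit x = {x} := by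
      ext b
      constructor
      · rintro ⟨k, rfl⟩; exact hiter k
      · rintro rfl; exact ⟨0, rfl⟩
    rw [hs, Set.ncard_singleton] at hx3
    omega
  have hfix : ∀ w : Q.A, w ≠ x → w ≠ Q.f x → w ≠ Q.f (Q.f x) → Q.f w = w := by
    intro w h1 h2 h3'
    by_contra hw
    have heq := hxuniq w (hne3 w hw)
    have hmem : w ∈ Q.fOrbit x := heq ▸ ⟨0, rfl⟩
    rw [hfOrb x] at hmem
    rcases hmem with h | h | h
    · exact h1 h
    · exact h2 h
    · exact h3' h
  have hfz : Q.f (Q.f (Q.f x)) = x := Q.f_cube x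
  have hxy : x ≠ Q.f x := Ne.symm hfx
  have hxz : x ≠ Q.f (Q.f x) := by
    intro h
    have h2 := Q.f_cube x
    rw [← h] at h2
    exact hfx h2
  have hyz : Q.f x ≠ Q.f (Q.f x) := fun h => hfx (finj h).symm
  have htx : Q.t x = Q.s (Q.f x) := (Q.s_f x).symm
  have hty : Q.t (Q.f x) = Q.s (Q.f (Q.f x)) := (Q.s_f (Q.f x)).symm
  have htz : Q.t (Q.f (Q.f x)) = Q.s x := by rw [← Q.s_f, hfz]
  haveI : DecidableEq Q.V := Classical.decEq _
  haveI : DecidableEq Q.A := Classical.decEq _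
  have hcover : ∀ v : Q.V, v = Q.s x ∨ v = Q.s (Q.f x) ∨ v = Q.s (Q.f (Q.f x)) := by
    intro v
    have h := Q.connected (Q.s x) v
    induction h with
    | refl => exact Or.inl rfl
    | tail _ hbc ih =>
      obtain ⟨e, he⟩ := hbc
      have hends : (Q.s e = Q.s x ∨ Q.s e = Q.s (Q.f x) ∨ Q.s e = Q.s (Q.f (Q.f x))) ∧
          (Q.t e = Q.s x ∨ Q.t e = Q.s (Q.f x) ∨ Q.t e = Q.s (Q.f (Q.f x))) ∨
          Q.t e = Q.s e := by
        by_cases he1 : e = x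
        · subst he1; exact Or.inl ⟨Or.inl rfl, Or.inr (Or.inl htx)⟩
        by_cases he2 : e = Q.f x
        · subst he2; exact Or.inl ⟨Or.inr (Or.inl rfl), Or.inr (Or.inr hty)⟩
        by_cases he3 : e = Q.f (Q.f x)
        · subst he3; exact Or.inl ⟨Or.inr (Or.inr rfl), Or.inl htz⟩
        · right; rw [← Q.s_f e, hfix e he1 he2 he3]
      rcases he with ⟨hs, ht⟩ | ⟨hs, ht⟩
      · rcases hends with ⟨_, h⟩ | h
        · rw [← ht]; exact h
        · rw [← ht, h, hs]; exact ih
      · rcases hends with ⟨h, _⟩ | h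
        · rw [← hs]; exact h
        · rw [← hs, ← h, ht]; exact ih
  have hVuniv : (Finset.univ : Finset Q.V) = {Q.s x, Q.s (Q.f x), Q.s (Q.f (Q.f x))} := by
    symm
    apply Finset.eq_univ_iff_forall.mpr
    intro v
    simp only [Finset.mem_insert, Finset.mem_singleton]
    exact hcover v
  have hVle : Fintype.card Q.V ≤ 3 := by
    rw [← Finset.card_univ, hVuniv]
    have c1 := Finset.card_insert_le (Q.s x) ({Q.s (Q.f x), Q.s (Q.f (Q.f x))} : Finset Q.V)
    have c2 := Finset.card_insert_le (Q.s (Q.f x)) ({Q.s (Q.f (Q.f x))} : Finset Q.V)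
    have c3 : ({Q.s (Q.f (Q.f x))} : Finset Q.V).card = 1 := Finset.card_singleton _
    omega
  have hVcard : Fintype.card Q.V = 3 := le_antisymm hVle h3
  have hle2 : ∀ u v : Q.V, (Finset.univ : Finset Q.V) = {u, v} → False := by
    intro u v h
    have h1 : Fintype.card Q.V ≤ 2 := by
      rw [← Finset.card_univ, h]
      have c2 := Finset.card_insert_le u ({v} : Finset Q.V)
      have c3 : ({v} : Finset Q.V).card = 1 := Finset.card_singleton _
      omega
    omega
  have hab : Q.s x ≠ Q.s (Q.f x) := by
    intro h
    apply hle2 (Q.s (Q.f x)) (Q.s (Q.f (Q.f x)))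
    rw [hVuniv, h, Finset.insert_idem]
  have hac : Q.s x ≠ Q.s (Q.f (Q.f x)) := by
    intro h
    apply hle2 (Q.s (Q.f x)) (Q.s (Q.f (Q.f x)))
    rw [hVuniv, h]
    ext w
    simp only [Finset.mem_insert, Finset.mem_singleton]
    tauto
  have hbc : Q.s (Q.f x) ≠ Q.s (Q.f (Q.f x)) := by
    intro h
    apply hle2 (Q.s x) (Q.s (Q.f (Q.f x)))
    rw [hVuniv, h]
    ext w
    simp only [Finset.mem_insert, Finset.mem_singleton]
    tauto
  have hne_src : ∀ w1 w2 : Q.A, Q.s w1 ≠ Q.s w2 → w1 ≠ w2 := fun w1 w2 h he => h (by rw [he])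
  have hlax : Q.bar x ≠ x := Q.bar_ne x
  have hlay : Q.bar x ≠ Q.f x := hne_src _ _ (by rw [Q.bar_src]; exact hab)
  have hlaz : Q.bar x ≠ Q.f (Q.f x) := hne_src _ _ (by rw [Q.bar_src]; exact hac)
  have hfla : Q.f (Q.bar x) = Q.bar x := hfix _ hlax hlay hlaz
  have hlbx : Q.bar (Q.f x) ≠ x := hne_src _ _ (by rw [Q.bar_src]; exact hab.symm)
  have hlby : Q.bar (Q.f x) ≠ Q.f x := Q.bar_ne _
  have hlbz : Q.bar (Q.f x) ≠ Q.f (Q.f x) := hne_src _ _ (by rw [Q.bar_src]; exact hbc)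
  have hflb : Q.f (Q.bar (Q.f x)) = Q.bar (Q.f x) := hfix _ hlbx hlby hlbz
  have hlcx : Q.bar (Q.f (Q.f x)) ≠ x := hne_src _ _ (by rw [Q.bar_src]; exact hac.symm)
  have hlcy : Q.bar (Q.f (Q.f x)) ≠ Q.f x := hne_src _ _ (by rw [Q.bar_src]; exact hbc.symm)
  have hlcz : Q.bar (Q.f (Q.f x)) ≠ Q.f (Q.f x) := Q.bar_ne _
  have hflc : Q.f (Q.bar (Q.f (Q.f x))) = Q.bar (Q.f (Q.f x)) := hfix _ hlcx hlcy hlcz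
  have htla : Q.t (Q.bar x) = Q.s x := by rw [← Q.s_f, hfla, Q.bar_src]
  have htlb : Q.t (Q.bar (Q.f x)) = Q.s (Q.f x) := by rw [← Q.s_f, hflb, Q.bar_src]
  have htlc : Q.t (Q.bar (Q.f (Q.f x))) = Q.s (Q.f (Q.f x)) := by rw [← Q.s_f, hflc, Q.bar_src]
  have hlalb : Q.bar x ≠ Q.bar (Q.f x) := hne_src _ _ (by rw [Q.bar_src, Q.bar_src]; exact hab)
  have hlalc : Q.bar x ≠ Q.bar (Q.f (Q.f x)) := hne_src _ _ (by rw [Q.bar_src, Q.bar_src]; exact hac)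
  have hlblc : Q.bar (Q.f x) ≠ Q.bar (Q.f (Q.f x)) := hne_src _ _ (by rw [Q.bar_src, Q.bar_src]; exact hbc)
  have hAcover : ∀ w : Q.A, w = x ∨ w = Q.f x ∨ w = Q.f (Q.f x) ∨ w = Q.bar x ∨
      w = Q.bar (Q.f x) ∨ w = Q.bar (Q.f (Q.f x)) := by
    intro w
    rcases hcover (Q.s w) with hs | hs | hs
    · by_cases hw : w = x
      · exact Or.inl hw
      · exact Or.inr (Or.inr (Or.inr (Or.inl (Q.bar_unique x w hs hw))))
    · by_cases hw : w = Q.f x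
      · exact Or.inr (Or.inl hw)
      · exact Or.inr (Or.inr (Or.inr (Or.inr (Or.inl (Q.bar_unique _ w hs hw)))))
    · by_cases hw : w = Q.f (Q.f x)
      · exact Or.inr (Or.inr (Or.inl hw))
      · exact Or.inr (Or.inr (Or.inr (Or.inr (Or.inr (Q.bar_unique _ w hs hw)))))
  have hAuniv : (Finset.univ : Finset Q.A) = {x, Q.f x, Q.f (Q.f x), Q.bar x,
      Q.bar (Q.f x), Q.bar (Q.f (Q.f x))} := by
    symm
    apply Finset.eq_univ_iff_forall.mpr
    intro w
    simp only [Finset.mem_insert, Finset.mem_singleton]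
    exact hAcover w
  have hAcard : Fintype.card Q.A = 6 := by
    rw [← Finset.card_univ, hAuniv]
    rw [Finset.card_insert_of_notMem, Finset.card_insert_of_notMem,
      Finset.card_insert_of_notMem, Finset.card_insert_of_notMem,
      Finset.card_insert_of_notMem, Finset.card_singleton]
    · simp [hlblc]
    · simp [hlalb, hlalc]
    · simp [Ne.symm hlaz, Ne.symm hlbz, Ne.symm hlcz]
    · simp [hyz, Ne.symm hlay, Ne.symm hlby, Ne.symm hlcy]
    · simp [hxy, hxz, Ne.symm hlax, Ne.symm hlbx, Ne.symm hlcx]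
  refine ⟨hVcard, hAcard, Q.s x, Q.s (Q.f x), Q.s (Q.f (Q.f x)), hab, hac, hbc, hcover,
    x, Q.f x, Q.f (Q.f x), Q.bar x, Q.bar (Q.f x), Q.bar (Q.f (Q.f x)),
    rfl, htx, rfl, hty, rfl, htz, rfl, rfl, hfz,
    Q.bar_src x, htla, hfla, Q.bar_src _, htlb, hflb, Q.bar_src _, htlc, hflc, hAcover⟩
end
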